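/- Let A be an n×n real SPD matrix, 𝓑 an m×m real SPD matrix, Π an n×m real matrix, ℐ an m×n real matrix with Π ℐ = Iₙ, and suppose (ℐv)ᵀ 𝓑 (ℐv) ≤ β · vᵀ A v for all v ∈ ℝⁿ, for some β > 0. Let M be an n×n real matrix with M + Mᵀ − A SPD (hence M invertible), let M̄ = M (M + Mᵀ − A)⁻¹ Mᵀ, and define B_mult⁻¹ = M̄⁻¹ + (I − M⁻ᵀ A) Π 𝓑⁻¹ Πᵀ (I − A M⁻¹). Then, with ξ = max{β, 1}, it holds that ξ⁻¹ · vᵀ A⁻¹ v ≤ vᵀ B_mult⁻¹ v for all v ∈ ℝⁿ. -/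

import Mathlib

open Matrix

/-- Lower spectral bound for the multiplicative auxiliary space preconditioner. -/
theorem stmt_10 {n m : ℕ}
    (A : Matrix (Fin n) (Fin n) ℝ) (hA : A.PosDef)
    (B : Matrix (Fin m) (Fin m) ℝ) (hB : B.PosDef)
    (P : Matrix (Fin n) (Fin m) ℝ) (J : Matrix (Fin m) (Fin n) ℝ)
    (hPJ : P * J = 1)
    (β : ℝ) (hβ : 0 < β)
    (hstab : ∀ v : Fin n → ℝ,
      (J.mulVec v) ⬝ᵥ B.mulVec (J.mulVec v) ≤ β * (v ⬝ᵥ A.mulVec v))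
    (M : Matrix (Fin n) (Fin n) ℝ) (hM : (M + Mᵀ - A).PosDef) :
    ∀ v : Fin n → ℝ,
      (max β 1)⁻¹ * (v ⬝ᵥ A⁻¹.mulVec v) ≤
        v ⬝ᵥ ((M * (M + Mᵀ - A)⁻¹ * Mᵀ)⁻¹ +
          (1 - (Mᵀ)⁻¹ * A) * (P * B⁻¹ * Pᵀ) * (1 - A * M⁻¹)).mulVec v := by
  intro v
  classical
  have hAsym : Aᵀ = A := by
    simpa [Matrix.conjTranspose_eq_transpose_of_trivial] using hA.isHermitian.eq
  have hBsym : Bᵀ = B := by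
    simpa [Matrix.conjTranspose_eq_transpose_of_trivial] using hB.isHermitian.eq
  set N : Matrix (Fin n) (Fin n) ℝ := M + Mᵀ - A with hNdef
  -- determinant units
  have hAd : IsUnit A.det := (Matrix.isUnit_iff_isUnit_det A).1 hA.isUnit
  have hNd : IsUnit N.det := (Matrix.isUnit_iff_isUnit_det N).1 hM.isUnit
  have hBd : IsUnit B.det := (Matrix.isUnit_iff_isUnit_det B).1 hB.isUnit
  -- M is invertible
  have hMinj : Function.Injective (M.mulVec) := by
    intro x y hxy
    by_contra hne
    have hz0 : x - y ≠ 0 := sub_ne_zero.mpr hne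
    have hz : M *ᵥ (x - y) = 0 := by
      rw [Matrix.mulVec_sub, hxy, sub_self]
    have hpos := hM.dotProduct_mulVec_pos hz0
    simp only [star_trivial] at hpos
    have hNz : (x - y) ⬝ᵥ N *ᵥ (x - y) =
        (x - y) ⬝ᵥ Mᵀ *ᵥ (x - y) - (x - y) ⬝ᵥ A *ᵥ (x - y) := by
      rw [hNdef, Matrix.sub_mulVec, Matrix.add_mulVec, hz]
      simp [dotProduct_sub, dotProduct_add]
    have hMt : (x - y) ⬝ᵥ Mᵀ *ᵥ (x - y) = (M *ᵥ (x - y)) ⬝ᵥ (x - y) := by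
      rw [Matrix.dotProduct_mulVec, Matrix.vecMul_transpose]
    have hApos := hA.dotProduct_mulVec_pos hz0
    simp only [star_trivial] at hApos
    rw [hNz, hMt, hz, zero_dotProduct] at hpos
    linarith
  have hMu : IsUnit M := Matrix.mulVec_injective_iff_isUnit.1 hMinj
  have hMd : IsUnit M.det := (Matrix.isUnit_iff_isUnit_det M).1 hMu
  have hMTd : IsUnit Mᵀ.det := by rwa [Matrix.det_transpose]
  -- the inverse of the symmetrized smoother
  have hMbarInv : (M * N⁻¹ * Mᵀ)⁻¹ = (Mᵀ)⁻¹ * N * M⁻¹ := by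
    rw [Matrix.mul_inv_rev, Matrix.mul_inv_rev,
      Matrix.nonsing_inv_nonsing_inv _ hNd, Matrix.mul_assoc]
  -- key vectors
  set u : Fin n → ℝ := A⁻¹ *ᵥ v with hu
  set p : Fin n → ℝ := M⁻¹ *ᵥ v with hp
  set w : Fin n → ℝ := u - p with hw
  have hAu : A *ᵥ u = v := by
    rw [hu, Matrix.mulVec_mulVec, Matrix.mul_nonsing_inv _ hAd, Matrix.one_mulVec]
  have hMp : M *ᵥ p = v := by
    rw [hp, Matrix.mulVec_mulVec, Matrix.mul_nonsing_inv _ hMd, Matrix.one_mulVec]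
  -- transpose-dot helper
  have dtp : ∀ (C : Matrix (Fin n) (Fin n) ℝ) (x z : Fin n → ℝ),
      x ⬝ᵥ (Cᵀ *ᵥ z) = (C *ᵥ x) ⬝ᵥ z := by
    intro C x z
    rw [Matrix.dotProduct_mulVec, Matrix.vecMul_transpose]
  -- Term 1 : v ⬝ Mbar⁻¹ v = p ⬝ N p
  have hT1 : v ⬝ᵥ ((M * N⁻¹ * Mᵀ)⁻¹) *ᵥ v = p ⬝ᵥ N *ᵥ p := by
    have h1 : ((Mᵀ)⁻¹ * N * M⁻¹) *ᵥ v = (M⁻¹)ᵀ *ᵥ (N *ᵥ (M⁻¹ *ᵥ v)) := by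
      simp [Matrix.mulVec_mulVec, Matrix.transpose_nonsing_inv, Matrix.mul_assoc]
    rw [hMbarInv, h1, dtp, ← hp]
  -- p ⬝ N p = u ⬝ A u - w ⬝ A w
  have hup : u ⬝ᵥ A *ᵥ p = v ⬝ᵥ p := by
    conv_lhs => rw [← hAsym, dtp, hAu]
  have hpu : p ⬝ᵥ A *ᵥ u = p ⬝ᵥ v := by rw [hAu]
  have hpMt : p ⬝ᵥ Mᵀ *ᵥ p = v ⬝ᵥ p := by rw [dtp, hMp]
  have hpM : p ⬝ᵥ M *ᵥ p = p ⬝ᵥ v := by rw [hMp]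
  have hkey1 : p ⬝ᵥ N *ᵥ p = u ⬝ᵥ A *ᵥ u - w ⬝ᵥ A *ᵥ w := by
    have hwexp : w ⬝ᵥ A *ᵥ w =
        u ⬝ᵥ A *ᵥ u - u ⬝ᵥ A *ᵥ p - p ⬝ᵥ A *ᵥ u + p ⬝ᵥ A *ᵥ p := by
      rw [hw]
      simp only [Matrix.mulVec_sub, dotProduct_sub, sub_dotProduct]
      ring
    have hNexp : p ⬝ᵥ N *ᵥ p =
        p ⬝ᵥ M *ᵥ p + p ⬝ᵥ Mᵀ *ᵥ p - p ⬝ᵥ A *ᵥ p := by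
      rw [hNdef, Matrix.sub_mulVec, Matrix.add_mulVec]
      simp [dotProduct_sub, dotProduct_add]
    have hcomm : v ⬝ᵥ p = p ⬝ᵥ v := dotProduct_comm _ _
    rw [hNexp, hwexp, hpM, hpMt, hup, hpu, hcomm]
    ring
  -- Term 2 : v ⬝ E2 v = s ⬝ B⁻¹ s  where s = Pᵀ (A w)
  set k : Fin n → ℝ := A *ᵥ w with hk
  set s : Fin m → ℝ := Pᵀ *ᵥ k with hs
  have hkv : (1 - A * M⁻¹) *ᵥ v = k := by
    rw [Matrix.sub_mulVec, Matrix.one_mulVec, hk, hw, Matrix.mulVec_sub, hAu]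
    rw [← Matrix.mulVec_mulVec, ← hp]
  have hLt : (1 - (Mᵀ)⁻¹ * A : Matrix (Fin n) (Fin n) ℝ) = (1 - A * M⁻¹)ᵀ := by
    rw [Matrix.transpose_sub, Matrix.transpose_one, Matrix.transpose_mul,
      Matrix.transpose_nonsing_inv, hAsym]
  have hT2 : v ⬝ᵥ ((1 - (Mᵀ)⁻¹ * A) * (P * B⁻¹ * Pᵀ) * (1 - A * M⁻¹)) *ᵥ v
      = s ⬝ᵥ B⁻¹ *ᵥ s := by
    have hsplit : ((1 - (Mᵀ)⁻¹ * A) * (P * B⁻¹ * Pᵀ) * (1 - A * M⁻¹)) *ᵥ v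
        = (1 - A * M⁻¹)ᵀ *ᵥ (P *ᵥ (B⁻¹ *ᵥ (Pᵀ *ᵥ ((1 - A * M⁻¹) *ᵥ v)))) := by
      rw [hLt]
      simp only [Matrix.mulVec_mulVec, Matrix.mul_assoc]
    rw [hsplit, dtp, hkv]
    rw [Matrix.dotProduct_mulVec k P, ← Matrix.mulVec_transpose, ← hs]
  -- scalar quantities
  set a : ℝ := w ⬝ᵥ A *ᵥ w with ha'
  set d : ℝ := u ⬝ᵥ A *ᵥ u with hd'
  set sB : ℝ := s ⬝ᵥ B⁻¹ *ᵥ s with hsB'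
  set y : Fin m → ℝ := J *ᵥ w with hy
  have ha : 0 ≤ a := by simpa [star_trivial] using hA.posSemidef.dotProduct_mulVec_nonneg w
  have hda : a ≤ d := by
    have := hM.posSemidef.dotProduct_mulVec_nonneg p
    simp only [star_trivial] at this
    rw [hkey1] at this
    linarith
  -- s ⬝ y = a
  have hsy : s ⬝ᵥ y = a := by
    have hwP : P *ᵥ y = w := by
      rw [hy, Matrix.mulVec_mulVec, hPJ, Matrix.one_mulVec]
    have : s ⬝ᵥ y = k ⬝ᵥ (P *ᵥ y) := by
      rw [Matrix.dotProduct_mulVec k P, ← Matrix.mulVec_transpose, ← hs]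
    rw [this, hwP, hk, ha', dotProduct_comm]
  -- Cauchy-Schwarz / AM-GM step : a / β ≤ sB
  have hstabw : y ⬝ᵥ B *ᵥ y ≤ β * a := hstab w
  have hcs : β⁻¹ * a ≤ sB := by
    set q : Fin m → ℝ := s - β⁻¹ • (B *ᵥ y) with hq
    have hq0 : 0 ≤ q ⬝ᵥ B⁻¹ *ᵥ q := by
      simpa [star_trivial] using hB.inv.posSemidef.dotProduct_mulVec_nonneg q
    have hBiB : B⁻¹ *ᵥ (B *ᵥ y) = y := by
      rw [Matrix.mulVec_mulVec, Matrix.nonsing_inv_mul _ hBd, Matrix.one_mulVec]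
    have hByBs : (B *ᵥ y) ⬝ᵥ (B⁻¹ *ᵥ s) = y ⬝ᵥ s := by
      rw [Matrix.dotProduct_mulVec (B *ᵥ y) B⁻¹, ← Matrix.mulVec_transpose]
      have hBisym : (B⁻¹)ᵀ = B⁻¹ := by
        rw [Matrix.transpose_nonsing_inv, hBsym]
      rw [hBisym, Matrix.mulVec_mulVec, Matrix.nonsing_inv_mul _ hBd, Matrix.one_mulVec]
    have hByy : (B *ᵥ y) ⬝ᵥ y = y ⬝ᵥ B *ᵥ y := dotProduct_comm _ _
    have hexp : q ⬝ᵥ B⁻¹ *ᵥ q =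
        sB - 2 * β⁻¹ * (s ⬝ᵥ y) + β⁻¹ * β⁻¹ * (y ⬝ᵥ B *ᵥ y) := by
      rw [hq]
      rw [Matrix.mulVec_sub, Matrix.mulVec_smul, hBiB]
      simp only [sub_dotProduct, dotProduct_sub, smul_dotProduct, dotProduct_smul,
        smul_eq_mul]
      rw [hByBs, hByy, dotProduct_comm y s]
      ring
    rw [hexp] at hq0
    rw [hsy] at hq0
    have hβinv : 0 < β⁻¹ := inv_pos.mpr hβ
    have h3 : β⁻¹ * β⁻¹ * (y ⬝ᵥ B *ᵥ y) ≤ β⁻¹ * β⁻¹ * (β * a) :=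
      mul_le_mul_of_nonneg_left hstabw (by positivity)
    have h4 : β⁻¹ * β⁻¹ * (β * a) = β⁻¹ * a := by field_simp
    linarith
  -- assemble
  have hdA : v ⬝ᵥ A⁻¹ *ᵥ v = d := by
    rw [← hu, hd', dotProduct_comm, hAu]
  rw [Matrix.add_mulVec, dotProduct_add, hT1, hT2, hkey1, hdA]
  set ξ : ℝ := max β 1 with hξ
  have hξ1 : 1 ≤ ξ := le_max_right _ _
  have hξβ : β ≤ ξ := le_max_left _ _
  have hξpos : 0 < ξ := lt_of_lt_of_le one_pos hξ1
  have hξinv1 : ξ⁻¹ ≤ 1 := by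
    rw [inv_le_one_iff₀]; right; exact hξ1
  have hξinvβ : ξ⁻¹ ≤ β⁻¹ := by
    apply inv_anti₀ hβ hξβ
  have h1 : ξ⁻¹ * (d - a) ≤ 1 * (d - a) :=
    mul_le_mul_of_nonneg_right hξinv1 (by linarith)
  have h2 : ξ⁻¹ * a ≤ β⁻¹ * a := mul_le_mul_of_nonneg_right hξinvβ ha
  nlinarith [h1, h2, hcs]
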